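/- Let p be any integer, x a real number in (0,1), and η ∈ ℂ with Im η > 0. Then I_p(x, 0, η) = ( log(1 − e^{2πix}) − πi x − log(−2πi) ) · Li_p(e^{2πiη}), where all logarithms are principal branches. -/

import Mathlib

open MeasureTheory Real Filter

/-- The polylogarithm `Li_p(w) = ∑_{j ≥ 1} w^j / j^p`, for integer index `p`. -/
noncomputable def Li (p : ℤ) (w : ℂ) : ℂ := ∑' j : ℕ, w ^ (j + 1) / ((j : ℂ) + 1) ^ p

/-- The function `I_p(x,ξ,η)`: the integral along the straight segment from `0` to `πix`
(parametrized by `y = t·πix`, `t ∈ [0,1]`) of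
`Li_p(e^{-2ξy+2πiη})/tanh y − Li_p(e^{2πiη})/y`, plus `Li_p(e^{2πiη})·log x`. -/
noncomputable def Ifun (p : ℤ) (x ξ η : ℂ) : ℂ :=
  (∫ t in (0 : ℝ)..1, ((π : ℂ) * Complex.I * x) *
      (Li p (Complex.exp (-2 * ξ * ((t : ℂ) * ((π : ℂ) * Complex.I * x)) +
            2 * (π : ℂ) * Complex.I * η)) /
          Complex.tanh ((t : ℂ) * ((π : ℂ) * Complex.I * x)) -
        Li p (Complex.exp (2 * (π : ℂ) * Complex.I * η)) /
          ((t : ℂ) * ((π : ℂ) * Complex.I * x)))) +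
    Li p (Complex.exp (2 * (π : ℂ) * Complex.I * η)) * Complex.log x

open Topology in
lemma ftc_aux (x : ℝ) (hx0 : 0 < x) (hx1 : x < 1) :
    ∫ t in (0:ℝ)..1, (π * x * Real.cos (π * x * t) / Real.sin (π * x * t) - 1 / t) =
      Real.log (Real.sin (π * x)) - Real.log (π * x) := by
  set a := π * x with ha
  have ha0 : 0 < a := mul_pos pi_pos hx0
  have haπ : a < π := by nlinarith [pi_pos]
  set g : ℝ → ℝ := fun t => a * Real.cos (a * t) / Real.sin (a * t) - 1 / t with hg
  set h : ℝ → ℝ := fun t => if t = 0 then a else Real.sin (a * t) / t with hh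
  set F : ℝ → ℝ := fun t => Real.log (h t) with hF
  have hsinpos : ∀ t : ℝ, 0 < t → t ≤ 1 → 0 < Real.sin (a * t) := by
    intro t ht0 ht1
    apply Real.sin_pos_of_pos_of_lt_pi (mul_pos ha0 ht0)
    calc a * t ≤ a * 1 := by nlinarith
    _ < π := by simpa using haπ
  -- slope limit
  have hslope : Tendsto (fun t : ℝ => Real.sin (a * t) / t) (𝓝[≠] (0:ℝ)) (𝓝 a) := by
    have hD : HasDerivAt (fun t : ℝ => Real.sin (a * t)) a 0 := by
      have h1 : HasDerivAt (fun t : ℝ => a * t) (a * 1) 0 := (hasDerivAt_id (0:ℝ)).const_mul a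
      have := (Real.hasDerivAt_sin (a * 0)).comp 0 h1
      simpa [Function.comp_def] using this
    have := hasDerivAt_iff_tendsto_slope.mp hD
    apply this.congr
    intro t
    simp [slope_fun_def_field]
  have hcontF : ContinuousOn F (Set.Icc 0 1) := by
    intro t ht
    rcases eq_or_ne t 0 with rfl | ht0
    · have hth : Tendsto h (𝓝[≠] (0:ℝ)) (𝓝 a) := by
        apply hslope.congr'
        filter_upwards [self_mem_nhdsWithin] with s hs
        have hs' : s ≠ 0 := hs
        simp [hh, hs']
      have hca : ContinuousAt h 0 := by
        rw [← continuousWithinAt_compl_self]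
        unfold ContinuousWithinAt
        simpa [hh] using hth
      exact ((Real.continuousAt_log (by simp [hh, ha0.ne'])).comp hca).continuousWithinAt
    · have htpos : 0 < t := lt_of_le_of_ne ht.1 (Ne.symm ht0)
      have hsne : Real.sin (a * t) ≠ 0 := (hsinpos t htpos ht.2).ne'
      have hq : ContinuousAt (fun s : ℝ => Real.sin (a * s) / s) t :=
        ((Real.continuous_sin.comp (continuous_const.mul continuous_id)).continuousAt).div
          continuousAt_id ht0
      have hch : ContinuousAt h t := by
        apply hq.congr
        filter_upwards [eventually_ne_nhds ht0] with s hs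
        simp [hh, if_neg hs]
      have hne : h t ≠ 0 := by
        simp only [hh, if_neg ht0]
        positivity
      exact ((Real.continuousAt_log hne).comp hch).continuousWithinAt
  have hderiv : ∀ t ∈ Set.Ioo (0:ℝ) 1, HasDerivAt F (g t) t := by
    intro t ht
    have htpos := ht.1
    have hsne : Real.sin (a * t) ≠ 0 := (hsinpos t ht.1 ht.2.le).ne'
    have hDsin : HasDerivAt (fun s : ℝ => Real.sin (a * s)) (Real.cos (a * t) * a) t := by
      have h1 : HasDerivAt (fun s : ℝ => a * s) (a * 1) t := (hasDerivAt_id t).const_mul a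
      have := (Real.hasDerivAt_sin (a * t)).comp t h1
      simpa [Function.comp_def] using this
    have h2 : HasDerivAt (fun s : ℝ => Real.log (Real.sin (a * s)))
        ((Real.sin (a * t))⁻¹ * (Real.cos (a * t) * a)) t :=
      by have := (Real.hasDerivAt_log hsne).comp t hDsin; exact this
    have h3 : HasDerivAt (fun s : ℝ => Real.log (Real.sin (a * s)) - Real.log s)
        ((Real.sin (a * t))⁻¹ * (Real.cos (a * t) * a) - t⁻¹) t :=
      h2.sub (Real.hasDerivAt_log htpos.ne')
    have hev : F =ᶠ[𝓝 t] fun s => Real.log (Real.sin (a * s)) - Real.log s := by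
      filter_upwards [isOpen_Ioo.mem_nhds ht] with s hs
      have hs0 : s ≠ 0 := hs.1.ne'
      simp only [hF, hh, if_neg hs0]
      rw [Real.log_div (hsinpos s hs.1 hs.2.le).ne' hs0]
    have := h3.congr_of_eventuallyEq hev
    refine this.congr_deriv ?_
    simp only [hg]
    rw [one_div, div_eq_mul_inv]
    ring
  have hcontg : ContinuousOn g (Set.Icc 0 1) := by
    intro t ht
    rcases eq_or_ne t 0 with rfl | ht0
    · have hg0 : g 0 = 0 := by simp [hg]
      unfold ContinuousWithinAt
      rw [hg0]
      have hbound : ∀ᶠ s in 𝓝[Set.Icc (0:ℝ) 1] 0, ‖g s‖ ≤ a ^ 2 * s := by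
        have h1 : ∀ᶠ s in 𝓝 (0:ℝ), |s - 0| < 1 / a := by
          apply eventually_abs_sub_lt
          positivity
        filter_upwards [h1.filter_mono nhdsWithin_le_nhds, self_mem_nhdsWithin] with s hs1 hs2
        rcases eq_or_ne s 0 with rfl | hs0
        · simp [hg]
        have hspos : 0 < s := lt_of_le_of_ne hs2.1 (Ne.symm hs0)
        set θ := a * s with hθ
        have hθpos : 0 < θ := mul_pos ha0 hspos
        have hθ1 : θ ≤ 1 := by
          have : |s| < 1 / a := by simpa using hs1
          rw [abs_of_pos hspos] at this
          rw [hθ]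
          calc a * s ≤ a * (1/a) := by nlinarith
          _ = 1 := by field_simp
        have hsin3 : θ - θ ^ 3 / 4 < Real.sin θ := by nlinarith [Real.sin_gt_sub_cube hθpos, pow_pos hθpos 3]
        have hθ3 : θ ^ 3 ≤ θ := by nlinarith [sq_nonneg θ, sq_nonneg (1 - θ)]
        have hsinθ : 0 < Real.sin θ := by nlinarith
        have hrw : g s = (θ * Real.cos θ - Real.sin θ) / (s * Real.sin θ) := by
          simp only [hg, ← hθ]
          field_simp
          ring
        have hnum : |θ * Real.cos θ - Real.sin θ| ≤ 3/4 * θ ^ 3 := by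
          have h1 := Real.sin_lt hθpos
          have h2 := Real.one_sub_sq_div_two_le_cos (x := θ)
          have h3 := Real.cos_le_one θ
          rw [abs_le]
          constructor <;> nlinarith
        have hden : 3/4 * (s * θ) ≤ s * Real.sin θ := by nlinarith
        have hden0 : (0:ℝ) < 3/4 * (s * θ) := by positivity
        calc ‖g s‖ = |θ * Real.cos θ - Real.sin θ| / (s * Real.sin θ) := by
              rw [hrw, Real.norm_eq_abs, abs_div, abs_of_pos (mul_pos hspos hsinθ)]
          _ ≤ (3/4 * θ ^ 3) / (3/4 * (s * θ)) :=
              div_le_div₀ (by positivity) hnum hden0 hden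
          _ = a ^ 2 * s := by
              rw [hθ, div_eq_iff (by positivity : (0:ℝ) < 3/4 * (s * (a * s))).ne']
              ring
      have htends : Tendsto (fun s : ℝ => a ^ 2 * s) (𝓝[Set.Icc (0:ℝ) 1] 0) (𝓝 0) := by
        have : Tendsto (fun s : ℝ => a ^ 2 * s) (𝓝 0) (𝓝 0) := by
          simpa using (continuous_mul_left (a ^ 2)).tendsto (0:ℝ)
        exact this.mono_left nhdsWithin_le_nhds
      exact squeeze_zero_norm' hbound htends
    · have htpos : 0 < t := lt_of_le_of_ne ht.1 (Ne.symm ht0)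
      have hsne : Real.sin (a * t) ≠ 0 := (hsinpos t htpos ht.2).ne'
      have : ContinuousAt g t := by
        apply ContinuousAt.sub
        · exact ((continuousAt_const.mul
            ((Real.continuous_cos.comp (continuous_const.mul continuous_id)).continuousAt)).div
            ((Real.continuous_sin.comp (continuous_const.mul continuous_id)).continuousAt) hsne)
        · exact continuousAt_const.div continuousAt_id ht0
      exact this.continuousWithinAt
  have hFTC := intervalIntegral.integral_eq_sub_of_hasDeriv_right_of_le zero_le_one hcontF
    (fun t ht => (hderiv t ht).hasDerivWithinAt)
    (hcontg.intervalIntegrable_of_Icc zero_le_one)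
  rw [hFTC]
  have hF1 : F 1 = Real.log (Real.sin a) := by simp [hF, hh]
  have hF0 : F 0 = Real.log a := by simp [hF, hh]
  rw [hF1, hF0]

open Topology in
lemma integrand_eq (L : ℂ) (a t : ℝ) (ha : 0 < a) (hst : t ≠ 0 → Real.sin (a * t) ≠ 0) :
    (↑a * Complex.I) * (L / Complex.tanh (↑(a * t) * Complex.I) - L / (↑(a * t) * Complex.I)) =
      L * ((a * Real.cos (a * t) / Real.sin (a * t) - 1 / t : ℝ) : ℂ) := by
  have htanh : Complex.tanh (↑(a * t) * Complex.I) =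
      ↑(Real.sin (a * t)) * Complex.I / ↑(Real.cos (a * t)) := by
    rw [Complex.tanh_eq_sinh_div_cosh, Complex.sinh_mul_I, Complex.cosh_mul_I,
      Complex.ofReal_sin, Complex.ofReal_cos]
  rcases eq_or_ne t 0 with rfl | ht0
  · simp [htanh]
  have hs := hst ht0
  rcases eq_or_ne (Real.cos (a * t)) 0 with hc | hc
  · have htC : (↑t : ℂ) ≠ 0 := Complex.ofReal_ne_zero.mpr ht0
    have haC : (↑a : ℂ) ≠ 0 := Complex.ofReal_ne_zero.mpr ha.ne'
    rw [htanh, hc]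
    push_cast [hc]
    simp only [div_zero, zero_sub, mul_zero, zero_div]
    field_simp [Complex.I_ne_zero]
  · rw [htanh]
    have hsC : (↑(Real.sin (a * t)) : ℂ) ≠ 0 := Complex.ofReal_ne_zero.mpr hs
    have hcC : (↑(Real.cos (a * t)) : ℂ) ≠ 0 := Complex.ofReal_ne_zero.mpr hc
    have htC : (↑t : ℂ) ≠ 0 := Complex.ofReal_ne_zero.mpr ht0
    have haC : (↑a : ℂ) ≠ 0 := Complex.ofReal_ne_zero.mpr ha.ne'
    push_cast
    field_simp [Complex.I_ne_zero]

open Topology in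
lemma rhs_eq (x : ℝ) (hx0 : 0 < x) (hx1 : x < 1) :
    Complex.log (1 - Complex.exp (2 * ↑π * Complex.I * ↑x)) - ↑π * Complex.I * ↑x -
      Complex.log (-(2 * ↑π * Complex.I)) =
    ↑(Real.log (Real.sin (π * x)) - Real.log π) := by
  have hπ := pi_pos
  have hsin : 0 < Real.sin (π * x) :=
    Real.sin_pos_of_pos_of_lt_pi (by positivity) (by nlinarith)
  set E := Complex.exp (↑(π * x) * Complex.I) with hE
  have hE0 : E ≠ 0 := Complex.exp_ne_zero _
  have eI : Complex.exp (↑(-(π / 2) : ℝ) * Complex.I) = -Complex.I := by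
    rw [Complex.exp_mul_I, ← Complex.ofReal_cos, ← Complex.ofReal_sin,
      Real.cos_neg, Real.sin_neg, Real.cos_pi_div_two, Real.sin_pi_div_two]
    push_cast
    ring
  have e2 : Complex.exp (↑(π * x - π / 2) * Complex.I) = E * (-Complex.I) := by
    rw [show (↑(π * x - π / 2) : ℂ) * Complex.I
        = ↑(π * x) * Complex.I + ↑(-(π / 2) : ℝ) * Complex.I by push_cast; ring,
      Complex.exp_add, eI]
  have e3 : (↑(Real.sin (π * x)) : ℂ) = (E⁻¹ - E) * Complex.I / 2 := by
    rw [Complex.ofReal_sin, Complex.sin, hE, ← Complex.exp_neg]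
    ring_nf
  have h1 : 1 - Complex.exp (2 * ↑π * Complex.I * ↑x) =
      ↑(2 * Real.sin (π * x)) * Complex.exp (↑(π * x - π / 2) * Complex.I) := by
    have e1 : Complex.exp (2 * ↑π * Complex.I * ↑x) = E * E := by
      rw [hE, ← Complex.exp_add]
      push_cast
      ring_nf
    rw [e1, e2]
    push_cast [e3]
    field_simp
    ring_nf
    simp only [Complex.inv_I, Complex.I_sq]
    ring
  have h2 : Complex.log (↑(2 * Real.sin (π * x)) * Complex.exp (↑(π * x - π / 2) * Complex.I))
      = ↑(Real.log (2 * Real.sin (π * x))) + ↑(π * x - π / 2) * Complex.I := by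
    rw [Complex.log_ofReal_mul (by positivity) (Complex.exp_ne_zero _), Complex.log_exp]
    · simp
      nlinarith
    · simp
      nlinarith
  have h3 : Complex.log (-(2 * ↑π * Complex.I))
      = ↑(Real.log (2 * π)) + ↑(-(π / 2) : ℝ) * Complex.I := by
    have : -(2 * ↑π * Complex.I) = ↑(2 * π) * Complex.exp (↑(-(π / 2) : ℝ) * Complex.I) := by
      rw [eI]
      push_cast
      ring
    rw [this, Complex.log_ofReal_mul (by positivity) (Complex.exp_ne_zero _), Complex.log_exp]
    · simp
      nlinarith
    · simp
      nlinarith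
  rw [h1, h2, h3]
  push_cast [Real.log_mul two_ne_zero hsin.ne', Real.log_mul two_ne_zero hπ.ne']
  ring

theorem stmt13 (p : ℤ) (x : ℝ) (hx0 : 0 < x) (hx1 : x < 1) (η : ℂ) (hη : 0 < η.im) :
    Ifun p (x : ℂ) 0 η =
      (Complex.log (1 - Complex.exp (2 * (π : ℂ) * Complex.I * x)) -
          (π : ℂ) * Complex.I * x - Complex.log (-(2 * (π : ℂ) * Complex.I))) *
        Li p (Complex.exp (2 * (π : ℂ) * Complex.I * η)) := by
  have hπ := pi_pos
  unfold Ifun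
  set L := Li p (Complex.exp (2 * (π : ℂ) * Complex.I * η)) with hL
  have ha0 : 0 < π * x := by positivity
  have hEq : Set.EqOn
      (fun t : ℝ => ((π : ℂ) * Complex.I * ↑x) *
        (Li p (Complex.exp (-2 * 0 * ((t : ℂ) * ((π : ℂ) * Complex.I * ↑x)) +
              2 * (π : ℂ) * Complex.I * η)) /
            Complex.tanh ((t : ℂ) * ((π : ℂ) * Complex.I * ↑x)) -
          L / ((t : ℂ) * ((π : ℂ) * Complex.I * ↑x))))
      (fun t : ℝ => L * ((π * x * Real.cos (π * x * t) / Real.sin (π * x * t) - 1 / t : ℝ) : ℂ))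
      (Set.uIcc 0 1) := by
    intro t ht
    rw [Set.uIcc_of_le zero_le_one] at ht
    simp only
    rw [show (-2 : ℂ) * 0 * ((t : ℂ) * ((π : ℂ) * Complex.I * ↑x)) + 2 * (π : ℂ) * Complex.I * η
        = 2 * (π : ℂ) * Complex.I * η by ring]
    rw [show ((t : ℂ) * ((π : ℂ) * Complex.I * ↑x)) = ↑(π * x * t) * Complex.I by
        push_cast; ring]
    rw [show ((π : ℂ) * Complex.I * ↑x) = ↑(π * x) * Complex.I by push_cast; ring]
    rw [← hL]
    apply integrand_eq L (π * x) t ha0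
    intro ht0
    have htpos : 0 < t := lt_of_le_of_ne ht.1 (Ne.symm ht0)
    exact (Real.sin_pos_of_pos_of_lt_pi (by positivity) (by nlinarith [ht.2])).ne'
  rw [intervalIntegral.integral_congr hEq, intervalIntegral.integral_const_mul,
    intervalIntegral.integral_ofReal, ftc_aux x hx0 hx1, ← Complex.ofReal_log hx0.le,
    rhs_eq x hx0 hx1]
  push_cast [Real.log_mul hπ.ne' hx0.ne']
  ring
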